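/- Let c > 0 and define g₁(x, u) = ∫_{x−u/2}^{x+u/2} exp(−c|y|) dy for x ∈ ℝ and u > 0. Then: (a) for every q > 0 there exists C > 0 such that for all u ∈ (0,1], ∫_ℝ g₁(x,u)^q dx ≤ C u^q; and (b) for every p > 0 there exists C > 0 such that for all u ≥ 1, ∫_ℝ g₁(x,u)^p dx ≤ C u. -/

import Mathlib

open MeasureTheory Filter Set Topology

private lemma intExpIoi (a m : ℝ) (ha : 0 < a) :
    ∫ x in Ioi m, Real.exp (-a * x) = Real.exp (-a * m) / a := by
  have h := integral_comp_mul_left_Ioi (fun x => Real.exp (-x)) m ha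
  simp only [smul_eq_mul, integral_exp_neg_Ioi] at h
  rw [show (fun x => Real.exp (-a * x)) = fun x => Real.exp (-(a * x)) by ext x; ring_nf]
  rw [h, neg_mul]
  field_simp

private lemma masterE {a u : ℝ} (ha : 0 < a) (hu : 0 ≤ u) :
    Integrable (fun x : ℝ => Real.exp (-a * max (|x| - u) 0)) ∧
    (∫ x : ℝ, Real.exp (-a * max (|x| - u) 0)) ≤ 2 * (u + 1 / a) := by
  set F : ℝ → ℝ := fun t => Real.exp (-a * max (t - u) 0) with hF
  have hFcont : Continuous F := by fun_prop
  have hFpos : ∀ t, 0 < F t := fun t => Real.exp_pos _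
  have hFle1 : ∀ t, F t ≤ 1 := by
    intro t
    rw [hF]
    simp only
    rw [Real.exp_le_one_iff]
    have : 0 ≤ max (t - u) 0 := le_max_right _ _
    nlinarith
  have hFle : ∀ t : ℝ, F t ≤ Real.exp (a * u) * Real.exp (-a * t) := by
    intro t
    rw [← Real.exp_add]
    apply Real.exp_le_exp.2
    have h1 : t - u ≤ max (t - u) 0 := le_max_left _ _
    nlinarith
  have hIoi : IntegrableOn F (Ioi 0) := by
    refine Integrable.mono' (((exp_neg_integrableOn_Ioi 0 ha)).const_mul (Real.exp (a * u)))
      hFcont.aestronglyMeasurable.restrict ?_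
    filter_upwards with t
    rw [Real.norm_eq_abs, abs_of_pos (hFpos t)]
    exact hFle t
  have hIoiAbs : IntegrableOn (fun x => F |x|) (Ioi 0) := by
    apply hIoi.congr_fun (fun x hx => ?_) measurableSet_Ioi
    rw [abs_of_pos hx]
  have hIic : IntegrableOn (fun x => F |x|) (Iic 0) := by
    rw [← Measure.map_neg_eq_self (volume : Measure ℝ)]
    have m : MeasurableEmbedding fun x : ℝ => -x := (Homeomorph.neg ℝ).measurableEmbedding
    rw [m.integrableOn_map_iff]
    simp_rw [Function.comp_def, abs_neg, neg_preimage, neg_Iic, neg_zero]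
    exact (integrableOn_Ici_iff_integrableOn_Ioi).mpr hIoiAbs
  have hInt : Integrable (fun x : ℝ => F |x|) := by
    rw [← integrableOn_univ, ← Iic_union_Ioi (a := (0:ℝ))]
    exact hIic.union hIoiAbs
  refine ⟨hInt, ?_⟩
  have habs : (∫ x : ℝ, F |x|) = 2 * ∫ x in Ioi (0:ℝ), F x := integral_comp_abs
  show (∫ x : ℝ, F |x|) ≤ 2 * (u + 1/a)
  rw [habs]
  have hsplit : (∫ x in Ioi (0:ℝ), F x) = (∫ x in Ioc (0:ℝ) u, F x) + ∫ x in Ioi u, F x := by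
    rw [← setIntegral_union (Ioc_disjoint_Ioi le_rfl) measurableSet_Ioi
      (hIoi.mono_set Ioc_subset_Ioi_self) (hIoi.mono_set (Ioi_subset_Ioi hu)),
      Ioc_union_Ioi_eq_Ioi hu]
  rw [hsplit]
  have h1 : (∫ x in Ioc (0:ℝ) u, F x) ≤ u := by
    calc (∫ x in Ioc (0:ℝ) u, F x) ≤ ∫ _x in Ioc (0:ℝ) u, (1:ℝ) := by
          apply setIntegral_mono_on (hIoi.mono_set Ioc_subset_Ioi_self)
            (integrableOn_const measure_Ioc_lt_top.ne) measurableSet_Ioc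
          exact fun x _ => hFle1 x
      _ = u := by simp [Real.volume_Ioc, ENNReal.toReal_ofReal hu, hu]
  have h2 : (∫ x in Ioi u, F x) = 1 / a := by
    have : (∫ x in Ioi u, F x) = ∫ x in Ioi u, Real.exp (a * u) * Real.exp (-a * x) := by
      apply setIntegral_congr_fun measurableSet_Ioi
      intro x hx
      rw [hF]
      simp only
      rw [max_eq_left (by simp at hx; linarith), ← Real.exp_add]
      ring_nf
    rw [this, integral_const_mul, intExpIoi a u ha]
    rw [eq_div_iff ha.ne']
    field_simp [← Real.exp_add]
    rw [← Real.exp_add, add_neg_cancel, Real.exp_zero]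
  rw [h2]
  linarith

private lemma f_integrable {c : ℝ} (hc : 0 < c) :
    Integrable (fun y : ℝ => Real.exp (-c * |y|)) := by
  have h := (masterE hc (le_refl (0:ℝ))).1
  have heq : (fun x : ℝ => Real.exp (-c * max (|x| - 0) 0)) = fun x => Real.exp (-c * |x|) := by
    funext x
    rw [sub_zero, max_eq_left (abs_nonneg x)]
  rwa [heq] at h

private lemma f_integral {c : ℝ} (hc : 0 < c) :
    (∫ y : ℝ, Real.exp (-c * |y|)) = 2 / c := by
  rw [integral_comp_abs (f := fun t => Real.exp (-c * t)), intExpIoi c 0 hc]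
  simp
  ring

private lemma g_repr {c u : ℝ} (hu : 0 < u) (x : ℝ) :
    (∫ y in Icc (x - u/2) (x + u/2), Real.exp (-c * |y|)) =
    (∫ y in (0:ℝ)..(x + u/2), Real.exp (-c * |y|)) -
      ∫ y in (0:ℝ)..(x - u/2), Real.exp (-c * |y|) := by
  have hf : Continuous fun y : ℝ => Real.exp (-c * |y|) := by fun_prop
  have hIcc : (∫ y in Icc (x - u/2) (x + u/2), Real.exp (-c * |y|)) =
      ∫ y in Ioc (x - u/2) (x + u/2), Real.exp (-c * |y|) := integral_Icc_eq_integral_Ioc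
  rw [hIcc, ← intervalIntegral.integral_of_le (by linarith)]
  exact (intervalIntegral.integral_interval_sub_left (hf.intervalIntegrable _ _)
    (hf.intervalIntegrable _ _)).symm

private lemma g_cont {c u : ℝ} (hu : 0 < u) :
    Continuous (fun x : ℝ => ∫ y in Icc (x - u/2) (x + u/2), Real.exp (-c * |y|)) := by
  have hf : Continuous fun y : ℝ => Real.exp (-c * |y|) := by fun_prop
  have hP := intervalIntegral.continuous_primitive (μ := volume) (fun a b => hf.intervalIntegrable a b) (0:ℝ)
  have heq : (fun x : ℝ => ∫ y in Icc (x - u/2) (x + u/2), Real.exp (-c * |y|)) =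
      fun x => (∫ y in (0:ℝ)..(x + u/2), Real.exp (-c * |y|)) -
        ∫ y in (0:ℝ)..(x - u/2), Real.exp (-c * |y|) := by
    funext x; exact g_repr hu x
  rw [heq]
  exact (hP.comp (continuous_id.add continuous_const)).sub
    (hP.comp (continuous_id.sub continuous_const))

private lemma abs_lower {u : ℝ} (hu : 0 < u) {x y : ℝ}
    (hy : y ∈ Icc (x - u/2) (x + u/2)) : |x| - u ≤ |y| := by
  obtain ⟨h1, h2⟩ := hy
  have h3 : |x - y| ≤ u / 2 := abs_le.2 ⟨by linarith, by linarith⟩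
  have h4 := abs_sub_abs_le_abs_sub x y
  linarith

private lemma g_le_mul {c u : ℝ} (hc : 0 < c) (hu : 0 < u) (x : ℝ) :
    (∫ y in Icc (x - u/2) (x + u/2), Real.exp (-c * |y|)) ≤
      u * Real.exp (-c * max (|x| - u) 0) := by
  have hf : Continuous fun y : ℝ => Real.exp (-c * |y|) := by fun_prop
  calc (∫ y in Icc (x - u/2) (x + u/2), Real.exp (-c * |y|))
      ≤ ∫ _y in Icc (x - u/2) (x + u/2), Real.exp (-c * max (|x| - u) 0) := by
        apply setIntegral_mono_on (hf.integrableOn_Icc)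
          (integrableOn_const measure_Icc_lt_top.ne) measurableSet_Icc
        intro y hy
        apply Real.exp_le_exp.2
        have h1 : |x| - u ≤ |y| := abs_lower hu hy
        have h2 : max (|x| - u) 0 ≤ |y| := max_le h1 (abs_nonneg y)
        nlinarith
    _ = u * Real.exp (-c * max (|x| - u) 0) := by
        rw [setIntegral_const, measureReal_def, Real.volume_Icc, smul_eq_mul]
        congr 1
        rw [show x + u/2 - (x - u/2) = u by ring, ENNReal.toReal_ofReal hu.le]

private lemma g_le_2c {c u : ℝ} (hc : 0 < c) (hu : 0 < u) (x : ℝ) :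
    (∫ y in Icc (x - u/2) (x + u/2), Real.exp (-c * |y|)) ≤
      (2 / c) * Real.exp (-c * max (|x| - u) 0) := by
  have hnn : 0 ≤ᵐ[volume] fun y : ℝ => Real.exp (-c * |y|) :=
    ae_of_all _ fun y => (Real.exp_pos _).le
  by_cases hx : |x| ≤ u
  · have hM : max (|x| - u) 0 = 0 := max_eq_right (by linarith)
    rw [hM, mul_zero, Real.exp_zero, mul_one]
    calc (∫ y in Icc (x - u/2) (x + u/2), Real.exp (-c * |y|))
        ≤ ∫ y : ℝ, Real.exp (-c * |y|) := setIntegral_le_integral (f_integrable hc) hnn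
      _ = 2 / c := f_integral hc
  · push_neg at hx
    set M : ℝ := |x| - u with hMdef
    have hM0 : 0 < M := by simp [hMdef]; linarith
    have hM : max (|x| - u) 0 = M := max_eq_left (by linarith)
    rw [hM]
    have hsub : Icc (x - u/2) (x + u/2) ⊆ Iic (-M) ∪ Ici M := by
      intro y hy
      have h1 : M ≤ |y| := by have := abs_lower hu hy; simpa [hMdef] using this
      rcases abs_cases y with ⟨h, _⟩ | ⟨h, _⟩
      · right; rw [← h]; exact h1
      · left; simp only [mem_Iic]; rw [h] at h1; linarith
    have hIicInt : IntegrableOn (fun y : ℝ => Real.exp (-c * |y|)) (Iic (-M)) :=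
      (f_integrable hc).integrableOn
    have hIciInt : IntegrableOn (fun y : ℝ => Real.exp (-c * |y|)) (Ici M) :=
      (f_integrable hc).integrableOn
    have hIic : (∫ y in Iic (-M), Real.exp (-c * |y|)) = Real.exp (-c * M) / c := by
      have h1 : (∫ y in Iic (-M), Real.exp (-c * |y|)) =
          ∫ y in Iic (-M), Real.exp (-c * -y) := by
        apply setIntegral_congr_fun measurableSet_Iic
        intro y hy
        simp only [mem_Iic] at hy
        have hy0 : y ≤ 0 := by linarith
        show Real.exp (-c * |y|) = Real.exp (-c * -y)
        rw [abs_of_nonpos hy0]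
      have h2 := integral_comp_neg_Iic (-M) (fun t => Real.exp (-c * t))
      simp only [neg_neg] at h2
      rw [h1, h2, intExpIoi c M hc]
    have hIci : (∫ y in Ici M, Real.exp (-c * |y|)) = Real.exp (-c * M) / c := by
      have h1 : (∫ y in Ici M, Real.exp (-c * |y|)) = ∫ y in Ici M, Real.exp (-c * y) := by
        apply setIntegral_congr_fun measurableSet_Ici
        intro y hy
        simp only [mem_Ici] at hy
        show Real.exp (-c * |y|) = Real.exp (-c * y)
        rw [abs_of_nonneg (by linarith)]
      rw [h1, integral_Ici_eq_integral_Ioi, intExpIoi c M hc]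
    calc (∫ y in Icc (x - u/2) (x + u/2), Real.exp (-c * |y|))
        ≤ ∫ y in Iic (-M) ∪ Ici M, Real.exp (-c * |y|) := by
          apply setIntegral_mono_set ((f_integrable hc).integrableOn)
            (ae_restrict_of_ae hnn) (HasSubset.Subset.eventuallyLE hsub)
      _ = (∫ y in Iic (-M), Real.exp (-c * |y|)) + ∫ y in Ici M, Real.exp (-c * |y|) := by
          apply setIntegral_union (Iic_disjoint_Ici.2 (by intro h; linarith)) measurableSet_Ici
            hIicInt hIciInt
      _ = (2 / c) * Real.exp (-c * M) := by rw [hIic, hIci]; field_simp; ring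

private lemma main_bound {c u r K : ℝ} (hc : 0 < c) (hu : 0 < u) (hr : 0 < r) (hK : 0 < K)
    (hb : ∀ x : ℝ, (∫ y in Icc (x - u/2) (x + u/2), Real.exp (-c * |y|)) ≤
      K * Real.exp (-c * max (|x| - u) 0)) :
    (∫ x : ℝ, (∫ y in Icc (x - u/2) (x + u/2), Real.exp (-c * |y|)) ^ r) ≤
      K ^ r * (2 * (u + 1 / (c * r))) := by
  set g : ℝ → ℝ := fun x => ∫ y in Icc (x - u/2) (x + u/2), Real.exp (-c * |y|) with hg
  have hg0 : ∀ x, 0 ≤ g x := fun x =>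
    setIntegral_nonneg measurableSet_Icc fun y _ => (Real.exp_pos _).le
  have hgc : Continuous g := g_cont hu
  have hcr : 0 < c * r := mul_pos hc hr
  obtain ⟨hEint, hEval⟩ := masterE hcr hu.le
  have hpt : ∀ x, g x ^ r ≤ K ^ r * Real.exp (-(c * r) * max (|x| - u) 0) := by
    intro x
    calc g x ^ r ≤ (K * Real.exp (-c * max (|x| - u) 0)) ^ r :=
          Real.rpow_le_rpow (hg0 x) (hb x) hr.le
      _ = K ^ r * Real.exp (-(c * r) * max (|x| - u) 0) := by
          rw [Real.mul_rpow hK.le (Real.exp_pos _).le, ← Real.exp_mul]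
          ring_nf
  have hint : Integrable (fun x => g x ^ r) := by
    refine Integrable.mono' (hEint.const_mul (K ^ r))
      ((Real.continuous_rpow_const hr.le).comp hgc).aestronglyMeasurable ?_
    filter_upwards with x
    rw [Real.norm_eq_abs, abs_of_nonneg (Real.rpow_nonneg (hg0 x) r)]
    exact hpt x
  calc (∫ x : ℝ, g x ^ r)
      ≤ ∫ x : ℝ, K ^ r * Real.exp (-(c * r) * max (|x| - u) 0) :=
        integral_mono hint (hEint.const_mul _) hpt
    _ = K ^ r * ∫ x : ℝ, Real.exp (-(c * r) * max (|x| - u) 0) := integral_const_mul _ _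
    _ ≤ K ^ r * (2 * (u + 1 / (c * r))) :=
        mul_le_mul_of_nonneg_left hEval (Real.rpow_nonneg hK.le r)

/-- Bounds for `∫_ℝ g₁(x,u)^r dx` where `g₁(x,u) = ∫_{x-u/2}^{x+u/2} e^{-c|y|} dy`:
(a) for `q > 0` and `u ≤ 1` the integral is `≤ C u^q`;
(b) for `p > 0` and `u ≥ 1` the integral is `≤ C u`. -/
theorem window_power_integral_bounds (c : ℝ) (hc : 0 < c) :
    (∀ q > (0 : ℝ), ∃ C > (0 : ℝ), ∀ u ∈ Ioc (0 : ℝ) 1,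
      (∫ x : ℝ, (∫ y in Icc (x - u / 2) (x + u / 2), Real.exp (-c * |y|)) ^ q) ≤
        C * u ^ q) ∧
    (∀ p > (0 : ℝ), ∃ C > (0 : ℝ), ∀ u : ℝ, 1 ≤ u →
      (∫ x : ℝ, (∫ y in Icc (x - u / 2) (x + u / 2), Real.exp (-c * |y|)) ^ p) ≤
        C * u) := by
  constructor
  · intro q hq
    have hcq : 0 < c * q := mul_pos hc hq
    refine ⟨2 * (1 + 1 / (c * q)), by positivity, ?_⟩
    rintro u ⟨hu0, hu1⟩
    have h := main_bound hc hu0 hq hu0 (fun x => g_le_mul hc hu0 x)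
    calc (∫ x : ℝ, (∫ y in Icc (x - u / 2) (x + u / 2), Real.exp (-c * |y|)) ^ q)
        ≤ u ^ q * (2 * (u + 1 / (c * q))) := h
      _ ≤ (2 * (1 + 1 / (c * q))) * u ^ q := by
          rw [mul_comm]
          apply mul_le_mul_of_nonneg_right _ (Real.rpow_nonneg hu0.le q)
          have : 0 < 1 / (c * q) := by positivity
          linarith
  · intro p hp
    have hcp : 0 < c * p := mul_pos hc hp
    have h2c : (0:ℝ) < 2 / c := by positivity
    refine ⟨(2 / c) ^ p * (2 * (1 + 1 / (c * p))), by positivity, ?_⟩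
    intro u hu
    have hu0 : (0:ℝ) < u := lt_of_lt_of_le one_pos hu
    have h := main_bound hc hu0 hp h2c (fun x => g_le_2c hc hu0 x)
    calc (∫ x : ℝ, (∫ y in Icc (x - u / 2) (x + u / 2), Real.exp (-c * |y|)) ^ p)
        ≤ (2 / c) ^ p * (2 * (u + 1 / (c * p))) := h
      _ ≤ ((2 / c) ^ p * (2 * (1 + 1 / (c * p)))) * u := by
          rw [mul_assoc]
          apply mul_le_mul_of_nonneg_left _ (Real.rpow_nonneg h2c.le p)
          have h1 : 0 ≤ 1 / (c * p) := by positivity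
          nlinarith
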